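/- Let u ∈ L²(ℝ²) and suppose u = f e^{−φ} where f is entire (as a function of z = x₁+ix₂) and φ : ℝ² → ℝ is continuous with ∫_{B_R(0)} e^{2φ} dx = O(R^{4/t + 2}) as R → ∞ for some t > 0. Then f is a polynomial of degree at most ⌈2/t⌉. -/

import Mathlib

open Complex MeasureTheory

namespace Stmt17Aux
open scoped ENNReal NNReal
open Complex MeasureTheory Real Set Filter


private lemma stmt17polar_int (f : ℂ → ℂ) (hf : Continuous f) {R : ℝ} :
    IntegrableOn (fun p : ℝ × ℝ => p.1 * ‖f (Complex.polarCoord.symm p)‖)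
      (Ioo (0:ℝ) R ×ˢ Ioo (-π) π) := by
  have hc : Continuous fun p : ℝ × ℝ => p.1 * ‖f (Complex.polarCoord.symm p)‖ := by
    simp only [Complex.polarCoord_symm_apply]
    fun_prop
  exact (hc.continuousOn.integrableOn_compact (isCompact_Icc.prod isCompact_Icc)).mono_set
    (Set.prod_mono Ioo_subset_Icc_self Ioo_subset_Icc_self)

private lemma stmt17polar_ball (f : ℂ → ℂ) (hf : Continuous f) {R : ℝ} (hR : 0 < R) :
    (∫ z in Metric.ball (0:ℂ) R, ‖f z‖) =
      ∫ r in Ioo (0:ℝ) R, ∫ θ in Ioo (-π) π, r * ‖f (Complex.polarCoord.symm (r, θ))‖ := by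
  set F : ℂ → ℝ := (Metric.ball (0:ℂ) R).indicator (fun z => ‖f z‖) with hF
  have h1 : (∫ z in Metric.ball (0:ℂ) R, ‖f z‖) = ∫ z, F z :=
    (integral_indicator measurableSet_ball).symm
  rw [h1, ← Complex.integral_comp_polarCoord_symm F]
  have h2 : ∀ p : ℝ × ℝ, p.1 • F (Complex.polarCoord.symm p) =
      {q : ℝ × ℝ | |q.1| < R}.indicator
        (fun q => q.1 * ‖f (Complex.polarCoord.symm q)‖) p := by
    intro p
    simp only [hF, Set.indicator_apply, Set.mem_setOf_eq, mem_ball_zero_iff,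
      Complex.norm_polarCoord_symm, smul_eq_mul]
    by_cases h : |p.1| < R <;> simp [h]
  rw [MeasureTheory.setIntegral_congr_fun (polarCoord.open_target.measurableSet)
      (fun p _ => h2 p),
    MeasureTheory.setIntegral_indicator (measurableSet_lt measurable_fst.abs measurable_const :
      MeasurableSet {q : ℝ × ℝ | |q.1| < R})]
  have h3 : polarCoord.target ∩ {q : ℝ × ℝ | |q.1| < R}
      = Ioo (0:ℝ) R ×ˢ Ioo (-π) π := by
    rw [polarCoord_target]
    ext ⟨r, θ⟩
    simp only [Set.mem_inter_iff, Set.mem_prod, Set.mem_Ioi, Set.mem_Ioo, Set.mem_setOf_eq]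
    constructor
    · rintro ⟨⟨h1', h2'⟩, h3'⟩
      exact ⟨⟨h1', by rwa [abs_of_pos h1'] at h3'⟩, h2'⟩
    · rintro ⟨⟨h1', h2'⟩, h3'⟩
      exact ⟨⟨h1', h3'⟩, by rwa [abs_of_pos h1']⟩
  rw [h3, Measure.volume_eq_prod, MeasureTheory.setIntegral_prod _ ?_]
  · rw [← Measure.volume_eq_prod]; exact stmt17polar_int f hf

private lemma stmt17circ_eq (f : ℂ → ℂ) (r : ℝ) :
    (∫ θ in (0:ℝ)..2*π, ‖f (circleMap 0 r θ)‖) =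
      ∫ θ in Set.Ioo (-π) π, ‖f (Complex.polarCoord.symm (r, θ))‖ := by
  have hper : Function.Periodic (fun θ : ℝ => ‖f (circleMap 0 r θ)‖) (2*π) :=
    fun θ => by simp [periodic_circleMap 0 r θ]
  have h1 : (∫ θ in (0:ℝ)..2*π, ‖f (circleMap 0 r θ)‖)
      = ∫ θ in (-π)..π, ‖f (circleMap 0 r θ)‖ := by
    have h2 := hper.intervalIntegral_add_eq 0 (-π)
    rw [zero_add] at h2
    rw [h2, show -π + 2*π = π by ring]
  rw [h1, intervalIntegral.integral_of_le (by linarith [pi_pos]),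
    MeasureTheory.integral_Ioc_eq_integral_Ioo]
  refine setIntegral_congr_fun measurableSet_Ioo fun θ _ => ?_
  congr 1
  simp [circleMap, Complex.exp_mul_I]

private lemma stmt17cps_unique (f : ℂ → ℂ) (hf : Differentiable ℂ f) {r : ℝ} (hr : 0 < r) :
    cauchyPowerSeries f 0 r = cauchyPowerSeries f 0 1 := by
  lift r to NNReal using hr.le with r' hr'
  have h1 := (hf.hasFPowerSeriesOnBall 0 (by exact_mod_cast hr : (0:NNReal) < r')).hasFPowerSeriesAt
  have h2 := (hf.hasFPowerSeriesOnBall 0 (one_pos : (0:NNReal) < 1)).hasFPowerSeriesAt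
  simpa using h1.eq_formalMultilinearSeries h2

private lemma stmt17coeff_bound (f : ℂ → ℂ) (hf : Differentiable ℂ f) (n : ℕ) {r : ℝ} (hr : 0 < r) :
    2 * π * ‖(cauchyPowerSeries f 0 1).coeff n‖ * r ^ (n+1) ≤
      ∫ θ in Set.Ioo (-π) π, r * ‖f (Complex.polarCoord.symm (r, θ))‖ := by
  have hb := norm_cauchyPowerSeries_le f 0 r n
  rw [stmt17cps_unique f hf hr, FormalMultilinearSeries.norm_apply_eq_norm_coef] at hb
  set A := ‖(cauchyPowerSeries f 0 1).coeff n‖ with hA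
  set g := ∫ θ in (0:ℝ)..2*π, ‖f (circleMap 0 r θ)‖ with hg
  have hgG : g = ∫ θ in Set.Ioo (-π) π, ‖f (Complex.polarCoord.symm (r, θ))‖ :=
    stmt17circ_eq f r
  rw [integral_const_mul, ← hgG]
  calc 2 * π * A * r ^ (n+1) = A * (2 * π * r ^ (n+1)) := by ring
    _ ≤ ((2 * π)⁻¹ * g) * |r|⁻¹ ^ n * (2 * π * r ^ (n+1)) := by
        refine mul_le_mul_of_nonneg_right hb ?_
        positivity
    _ = r * g := by
        rw [abs_of_pos hr]
        field_simp
        rw [one_div, inv_pow, pow_succ, ← mul_assoc, mul_assoc g, inv_mul_cancel₀ (pow_ne_zero _ hr.ne'), mul_one]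

private lemma stmt17coeff_zero (t : ℝ) (ht : 0 < t) (f : ℂ → ℂ) (hf : Differentiable ℂ f)
    (φ : ℝ × ℝ → ℝ) (hφ : Continuous φ)
    (u : ℝ × ℝ → ℂ) (hu : ∀ x : ℝ × ℝ, u x = f (x.1 + x.2 * Complex.I) * Real.exp (-φ x))
    (huL2 : MemLp u 2 volume)
    (hgrow : ∃ c R₀ : ℝ, ∀ R : ℝ, R₀ ≤ R →
      (∫ x in Metric.ball (0 : ℝ × ℝ) R, Real.exp (2 * φ x)) ≤ c * R ^ (4 / t + 2))
    (n : ℕ) (hn : ⌈2 / t⌉₊ < n) : (cauchyPowerSeries f 0 1).coeff n = 0 := by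
  obtain ⟨c, R₀, hgrow⟩ := hgrow
  have hfc : Continuous f := hf.continuous
  have huc : Continuous u := by
    have : u = fun x : ℝ × ℝ => f (x.1 + x.2 * Complex.I) * (Real.exp (-φ x) : ℂ) :=
      funext hu
    rw [this]; fun_prop
  -- global L² mass
  have hu2 : Integrable (fun x : ℝ × ℝ => ‖u x‖ ^ 2) volume := by
    have h := huL2.integrable_norm_rpow two_ne_zero ENNReal.ofNat_ne_top
    have h2 : ((2 : ℝ≥0∞).toReal) = (2 : ℝ) := by simp
    refine h.congr (ae_of_all _ fun x => ?_)
    show ‖u x‖ ^ ((2:ℝ≥0∞).toReal) = ‖u x‖ ^ (2:ℕ)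
    symm
    rw [h2, show ‖u x‖ ^ (2:ℝ) = ‖u x‖ ^ ((2:ℕ):ℝ) by norm_num, Real.rpow_natCast]
  set E := ∫ x : ℝ × ℝ, ‖u x‖ ^ 2 with hE
  set A := ‖(cauchyPowerSeries f 0 1).coeff n‖ with hA
  -- the key estimate for every large R
  have key : ∀ R : ℝ, max R₀ 1 ≤ R →
      2 * π * A * (R ^ (n+2) / (n+2)) ≤ (E + c) * R ^ (2 / t + 1) := by
    intro R hR
    have hR1 : (1:ℝ) ≤ R := le_trans (le_max_right _ _) hR
    have hRpos : (0:ℝ) < R := lt_of_lt_of_le one_pos hR1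
    -- lower bound: coefficient vs ball integral of ‖f‖
    have hIright : IntegrableOn
        (fun r => ∫ θ in Ioo (-π) π, r * ‖f (Complex.polarCoord.symm (r, θ))‖)
        (Ioo (0:ℝ) R) := by
      have h := stmt17polar_int f hfc (R := R)
      rw [IntegrableOn, Measure.volume_eq_prod, ← Measure.prod_restrict] at h
      exact h.integral_prod_left
    have hIleft : IntegrableOn (fun r : ℝ => 2 * π * A * r ^ (n+1)) (Ioo (0:ℝ) R) :=
      ((continuous_const.mul (continuous_pow (n+1))).continuousOn.integrableOn_compact
        isCompact_Icc).mono_set Ioo_subset_Icc_self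
    have hmono := setIntegral_mono_on hIleft hIright measurableSet_Ioo
      (fun r hr => stmt17coeff_bound f hf n hr.1)
    have hlcalc : (∫ r in Ioo (0:ℝ) R, 2 * π * A * r ^ (n+1))
        = 2 * π * A * (R ^ (n+2) / (n+2)) := by
      rw [integral_const_mul, ← integral_Ioc_eq_integral_Ioo,
        ← intervalIntegral.integral_of_le hRpos.le, integral_pow]
      push_cast
      ring
    have low : 2 * π * A * (R ^ (n+2) / (n+2)) ≤ ∫ z in Metric.ball (0:ℂ) R, ‖f z‖ := by
      rw [← hlcalc, stmt17polar_ball f hfc hRpos]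
      exact hmono
    -- transfer to ℝ × ℝ
    set e := Complex.measurableEquivRealProd with he
    set D := e.symm ⁻¹' Metric.ball (0:ℂ) R with hD
    have hDmeas : MeasurableSet D := e.symm.measurable measurableSet_ball
    have hDsub : D ⊆ Metric.ball (0:ℝ×ℝ) R := by
      intro x hx
      simp only [hD, Set.mem_preimage, Metric.mem_ball, dist_zero_right] at hx ⊢
      have h1 : |x.1| ≤ ‖e.symm x‖ := by
        simpa [he, Complex.measurableEquivRealProd_symm_apply] using
          Complex.abs_re_le_norm (e.symm x)
      have h2 : |x.2| ≤ ‖e.symm x‖ := by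
        simpa [he, Complex.measurableEquivRealProd_symm_apply] using
          Complex.abs_im_le_norm (e.symm x)
      rw [Prod.norm_def]
      simp only [Real.norm_eq_abs]
      exact max_lt (lt_of_le_of_lt h1 hx) (lt_of_le_of_lt h2 hx)
    have htrans : (∫ z in Metric.ball (0:ℂ) R, ‖f z‖)
        = ∫ x in D, ‖u x‖ * Real.exp (φ x) := by
      rw [← (Complex.volume_preserving_equiv_real_prod.symm).setIntegral_preimage_emb
        e.symm.measurableEmbedding (fun z => ‖f z‖) (Metric.ball (0:ℂ) R)]
      refine setIntegral_congr_fun hDmeas fun x _ => ?_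
      have hfx : e.symm x = (x.1 : ℂ) + x.2 * I := by
        rw [he, Complex.measurableEquivRealProd_symm_apply, Complex.mk_eq_add_mul_I]
      rw [hfx]
      have h := hu x
      have hne : (Real.exp (-φ x) : ℂ) ≠ 0 := by
        exact_mod_cast Real.exp_ne_zero _
      have hfeq : f ((x.1 : ℂ) + x.2 * I) = u x * Real.exp (φ x) := by
        rw [h]
        rw [mul_assoc, ← Complex.ofReal_mul, ← Real.exp_add, neg_add_cancel,
          Real.exp_zero, Complex.ofReal_one, mul_one]
      rw [hfeq, norm_mul, Complex.norm_real, Real.norm_eq_abs, Real.abs_exp]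
    -- AM-GM bound
    set lam := R ^ ((2:ℝ)/t + 1) with hlamdef
    have hlam : 0 < lam := Real.rpow_pos_of_pos hRpos _
    have hAM : ∀ x : ℝ × ℝ, ‖u x‖ * Real.exp (φ x) ≤
        lam * ‖u x‖ ^ 2 + lam⁻¹ * Real.exp (2 * φ x) := by
      intro x
      set a := ‖u x‖
      set b := Real.exp (φ x)
      have ha : 0 ≤ a := norm_nonneg _
      have hb : 0 < b := Real.exp_pos _
      have hexp2 : Real.exp (2 * φ x) = b ^ 2 := by
        rw [two_mul, Real.exp_add, sq]
      rw [hexp2]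
      have key2 : lam * (a * b) ≤ lam * (lam * a ^ 2 + lam⁻¹ * b ^ 2) := by
        have h1 : lam * (lam * a ^ 2 + lam⁻¹ * b ^ 2) = lam ^ 2 * a ^ 2 + b ^ 2 := by
          field_simp
        rw [h1]
        nlinarith [sq_nonneg (lam * a - b), mul_nonneg (mul_nonneg hlam.le ha) hb.le]
      exact le_of_mul_le_mul_left key2 hlam
    -- integrability on D
    have hIexp : IntegrableOn (fun x : ℝ × ℝ => Real.exp (2 * φ x))
        (Metric.ball (0:ℝ×ℝ) R) :=
      ((Real.continuous_exp.comp (continuous_const.mul hφ)).continuousOn.integrableOn_compact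
        (isCompact_closedBall 0 R)).mono_set Metric.ball_subset_closedBall
    have hIexpD : IntegrableOn (fun x : ℝ × ℝ => Real.exp (2 * φ x)) D :=
      hIexp.mono_set hDsub
    have hIu2D : IntegrableOn (fun x : ℝ × ℝ => ‖u x‖ ^ 2) D := hu2.integrableOn
    have hIlhsD : IntegrableOn (fun x : ℝ × ℝ => ‖u x‖ * Real.exp (φ x)) D :=
      ((huc.norm.mul (Real.continuous_exp.comp hφ)).continuousOn.integrableOn_compact
        (isCompact_closedBall 0 R)).mono_set
        (hDsub.trans Metric.ball_subset_closedBall)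
    have hIrhsD : IntegrableOn
        (fun x : ℝ × ℝ => lam * ‖u x‖ ^ 2 + lam⁻¹ * Real.exp (2 * φ x)) D :=
      (hIu2D.const_mul lam).add (hIexpD.const_mul lam⁻¹)
    -- upper chain
    have up1 : (∫ x in D, ‖u x‖ * Real.exp (φ x)) ≤
        ∫ x in D, (lam * ‖u x‖ ^ 2 + lam⁻¹ * Real.exp (2 * φ x)) :=
      setIntegral_mono_on hIlhsD hIrhsD hDmeas fun x _ => hAM x
    have up2 : (∫ x in D, (lam * ‖u x‖ ^ 2 + lam⁻¹ * Real.exp (2 * φ x)))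
        = lam * (∫ x in D, ‖u x‖ ^ 2) + lam⁻¹ * ∫ x in D, Real.exp (2 * φ x) := by
      rw [integral_add (hIu2D.const_mul lam) (hIexpD.const_mul lam⁻¹),
        integral_const_mul, integral_const_mul]
    have up3 : (∫ x in D, ‖u x‖ ^ 2) ≤ E :=
      setIntegral_le_integral hu2 (ae_of_all _ fun x => sq_nonneg _)
    have up4 : (∫ x in D, Real.exp (2 * φ x)) ≤ c * R ^ (4 / t + 2) :=
      (setIntegral_mono_set hIexp (ae_of_all _ fun x => (Real.exp_pos _).le)
        hDsub.eventuallyLE).trans (hgrow R (le_trans (le_max_left _ _) hR))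
    have hpowsplit : R ^ ((4:ℝ) / t + 2) = lam * lam := by
      rw [hlamdef, ← Real.rpow_add hRpos]
      congr 1
      ring
    calc 2 * π * A * (R ^ (n+2) / (n+2))
        ≤ ∫ z in Metric.ball (0:ℂ) R, ‖f z‖ := low
      _ = ∫ x in D, ‖u x‖ * Real.exp (φ x) := htrans
      _ ≤ lam * (∫ x in D, ‖u x‖ ^ 2) + lam⁻¹ * ∫ x in D, Real.exp (2 * φ x) := by
          rw [← up2]; exact up1
      _ ≤ lam * E + lam⁻¹ * (c * R ^ (4 / t + 2)) := by
          refine add_le_add (mul_le_mul_of_nonneg_left up3 hlam.le)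
            (mul_le_mul_of_nonneg_left up4 (inv_nonneg.2 hlam.le))
      _ = (E + c) * R ^ (2 / t + 1) := by
          rw [hpowsplit, ← hlamdef]
          field_simp
  -- conclude A = 0
  have hR₁pos : (0:ℝ) < max R₀ 1 := lt_of_lt_of_le one_pos (le_max_right _ _)
  have hEc : 0 ≤ E + c := by
    have hk := key (max R₀ 1) le_rfl
    have hX : (0:ℝ) < (max R₀ 1) ^ ((2:ℝ)/t + 1) := Real.rpow_pos_of_pos hR₁pos _
    have hL : (0:ℝ) ≤ 2 * π * A * ((max R₀ 1) ^ (n+2) / (n+2)) := by positivity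
    nlinarith
  set C := ((n:ℝ) + 2) * (E + c) / (2 * π) with hC
  have hAle : ∀ R : ℝ, max R₀ 1 ≤ R → A ≤ C / R := by
    intro R hR
    have hR1 : (1:ℝ) ≤ R := le_trans (le_max_right _ _) hR
    have hRpos : (0:ℝ) < R := lt_of_lt_of_le one_pos hR1
    have hk := key R hR
    have h1 : R ^ ((2:ℝ)/t + 1) ≤ R ^ (n+1) := by
      rw [← Real.rpow_natCast R (n+1)]
      apply Real.rpow_le_rpow_of_exponent_le hR1
      have hdn : ((⌈2/t⌉₊ : ℝ)) < n := by exact_mod_cast hn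
      have hceil : (2:ℝ)/t ≤ (⌈2/t⌉₊ : ℝ) := Nat.le_ceil _
      push_cast
      linarith
    have h2 : 2 * π * A * (R ^ (n+2) / (n+2)) = (2 * π * A * R / ((n:ℝ)+2)) * R ^ (n+1) := by
      rw [pow_succ]
      push_cast
      ring
    have h3 : (2 * π * A * R / ((n:ℝ)+2)) * R ^ (n+1) ≤ (E + c) * R ^ (n+1) := by
      rw [← h2]
      exact hk.trans (mul_le_mul_of_nonneg_left h1 hEc)
    have h4 : 2 * π * A * R / ((n:ℝ)+2) ≤ E + c :=
      le_of_mul_le_mul_right h3 (pow_pos hRpos (n+1))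
    rw [le_div_iff₀ hRpos, hC, le_div_iff₀ (by positivity : (0:ℝ) < 2 * π)]
    rw [div_le_iff₀ (by positivity : (0:ℝ) < (n:ℝ)+2)] at h4
    nlinarith
  have h0 : Filter.Tendsto (fun R : ℝ => C / R) atTop (nhds 0) :=
    tendsto_const_nhds.div_atTop tendsto_id
  have hA0 : A ≤ 0 := ge_of_tendsto h0 (Filter.eventually_atTop.2 ⟨max R₀ 1, hAle⟩)
  have : A = 0 := le_antisymm hA0 (norm_nonneg _)
  rwa [hA, norm_eq_zero] at this


end Stmt17Aux

open Complex MeasureTheory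

/-- If `u = f e^{-φ} ∈ L²(ℝ²)` with `f` entire and
`∫_{B_R(0)} e^{2φ} = O(R^{4/t+2})` as `R → ∞`, then `f` is a polynomial of degree at most
`⌈2/t⌉`. -/
theorem stmt17 (t : ℝ) (ht : 0 < t) (f : ℂ → ℂ) (hf : Differentiable ℂ f)
    (φ : ℝ × ℝ → ℝ) (hφ : Continuous φ)
    (u : ℝ × ℝ → ℂ) (hu : ∀ x : ℝ × ℝ, u x = f (x.1 + x.2 * Complex.I) * Real.exp (-φ x))
    (huL2 : MemLp u 2 volume)
    (hgrow : ∃ c R₀ : ℝ, ∀ R : ℝ, R₀ ≤ R →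
      (∫ x in Metric.ball (0 : ℝ × ℝ) R, Real.exp (2 * φ x)) ≤ c * R ^ (4 / t + 2)) :
    ∃ p : Polynomial ℂ, p.natDegree ≤ ⌈2 / t⌉₊ ∧ ∀ z : ℂ, f z = p.eval z := by
  classical
  set p := cauchyPowerSeries f 0 1 with hp
  set d := ⌈2 / t⌉₊ with hd
  have hcz : ∀ n, d < n → p.coeff n = 0 := fun n hn =>
    Stmt17Aux.stmt17coeff_zero t ht f hf φ hφ u hu huL2 hgrow n hn
  have hsum : ∀ z : ℂ, HasSum (fun n => z ^ n • p.coeff n) (f z) := by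
    intro z
    have H := hf.hasFPowerSeriesOnBall 0 (one_pos : (0:NNReal) < 1)
    have hz : z ∈ EMetric.ball (0:ℂ) ⊤ := EMetric.mem_ball.2 (edist_lt_top _ _)
    have := H.hasSum hz
    simpa [FormalMultilinearSeries.apply_eq_pow_smul_coeff] using this
  refine ⟨∑ k ∈ Finset.range (d+1), Polynomial.monomial k (p.coeff k), ?_, ?_⟩
  · refine Polynomial.natDegree_sum_le_of_forall_le _ _ fun k hk => ?_
    exact (Polynomial.natDegree_monomial_le _).trans
      (Nat.lt_succ_iff.1 (Finset.mem_range.1 hk))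
  · intro z
    have h1 : f z = ∑' n, z ^ n • p.coeff n := (hsum z).tsum_eq.symm
    rw [h1, tsum_eq_sum (s := Finset.range (d+1)) ?_]
    · simp [Polynomial.eval_finset_sum, Polynomial.eval_monomial, smul_eq_mul, mul_comm]
    · intro n hn
      rw [hcz n (Nat.lt_of_succ_le (le_of_not_gt fun h => hn (Finset.mem_range.2 h)))]
      simp
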